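/- Let d ≥ 2 and let P be a tuple of n points in [0,1)^d that forms a chain for the componentwise order, i.e., for any two points x, y of P we have x ≤ y or y ≤ x componentwise. If either (d = 2 and n ≥ 4) or (d ≥ 3 and n ≥ 3), then d*(P) ≥ 1/n. -/

import Mathlib

open Finset

noncomputable section

open scoped Classical

/-- Number of points of the tuple `P` lying in the open anchored box `[0,q)`. -/
def openCount {n d : ℕ} (P : Fin n → Fin d → ℝ) (q : Fin d → ℝ) : ℕ :=
  (Finset.univ.filter (fun i : Fin n => ∀ j, P i j < q j)).card

/-- Number of points of the tuple `P` lying in the closed anchored box `[0,q]`. -/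
def closedCount {n d : ℕ} (P : Fin n → Fin d → ℝ) (q : Fin d → ℝ) : ℕ :=
  (Finset.univ.filter (fun i : Fin n => ∀ j, P i j ≤ q j)).card

/-- Open local discrepancy `δ(P,q) = ∏ q_j − #{i : x⁽ⁱ⁾ ∈ [0,q)}/n`. -/
def openDisc {n d : ℕ} (P : Fin n → Fin d → ℝ) (q : Fin d → ℝ) : ℝ :=
  (∏ j, q j) - (openCount P q : ℝ) / n

/-- Closed local discrepancy `δ̄(P,q) = #{i : x⁽ⁱ⁾ ∈ [0,q]}/n − ∏ q_j`. -/
def closedDisc {n d : ℕ} (P : Fin n → Fin d → ℝ) (q : Fin d → ℝ) : ℝ :=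
  (closedCount P q : ℝ) / n - ∏ j, q j

/-- `max(δ(P,q), δ̄(P,q))`. -/
def localDisc {n d : ℕ} (P : Fin n → Fin d → ℝ) (q : Fin d → ℝ) : ℝ :=
  max (openDisc P q) (closedDisc P q)

/-- The L∞ star discrepancy `d*(P) = sup_{q ∈ [0,1]^d} max(δ(P,q), δ̄(P,q))`. -/
def starDisc {n d : ℕ} (P : Fin n → Fin d → ℝ) : ℝ :=
  sSup {r : ℝ | ∃ q : Fin d → ℝ, (∀ j, q j ∈ Set.Icc (0:ℝ) 1) ∧ r = localDisc P q}

/-- If the points of `P ⊆ [0,1)^d` form a chain for the componentwise order and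
`d = 2, n ≥ 4` or `d ≥ 3, n ≥ 3`, then `d*(P) ≥ 1/n`. -/
theorem stmt_1 {d n : ℕ} (hd : 2 ≤ d) (P : Fin n → Fin d → ℝ)
    (hP : ∀ i j, P i j ∈ Set.Ico (0:ℝ) 1)
    (hchain : ∀ i k : Fin n, (∀ j, P i j ≤ P k j) ∨ (∀ j, P k j ≤ P i j))
    (h : (d = 2 ∧ 4 ≤ n) ∨ (3 ≤ d ∧ 3 ≤ n)) :
    1 / (n : ℝ) ≤ starDisc P := by
  by_contra hlt
  push_neg at hlt
  have hn : 3 ≤ n := by rcases h with ⟨_, h4⟩ | ⟨_, h3⟩ <;> omega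
  have hnR : (3:ℝ) ≤ (n:ℝ) := by exact_mod_cast hn
  have hn0 : (0:ℝ) < n := by linarith
  have hbdd : BddAbove {r : ℝ | ∃ q : Fin d → ℝ,
      (∀ j, q j ∈ Set.Icc (0:ℝ) 1) ∧ r = localDisc P q} := by
    refine ⟨1, fun r hr => ?_⟩
    obtain ⟨q, hq, rfl⟩ := hr
    have hprod0 : (0:ℝ) ≤ ∏ j, q j := Finset.prod_nonneg fun j _ => (hq j).1
    have hprod1 : (∏ j, q j) ≤ 1 :=
      Finset.prod_le_one (fun j _ => (hq j).1) (fun j _ => (hq j).2)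
    have hccn : closedCount P q ≤ n := by
      unfold closedCount
      exact le_trans (Finset.card_filter_le _ _) (by simp)
    have hcc : (closedCount P q : ℝ) / n ≤ 1 := by
      rw [div_le_one hn0]; exact_mod_cast hccn
    have hoc : (0:ℝ) ≤ (openCount P q : ℝ) / n := by positivity
    refine max_le ?_ ?_
    · unfold openDisc; linarith
    · unfold closedDisc; linarith
  have key : ∀ q : Fin d → ℝ, (∀ j, q j ∈ Set.Icc (0:ℝ) 1) →
      openDisc P q < 1 / n ∧ closedDisc P q < 1 / n := by
    intro q hq
    have := lt_of_le_of_lt (le_csSup hbdd ⟨q, hq, rfl⟩) hlt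
    exact max_lt_iff.mp this
  -- a : minimum of the chain, b : minimum of the rest
  obtain ⟨a, -, hamin'⟩ := Finset.exists_min_image Finset.univ (fun i => ∑ j, P i j)
    ⟨⟨0, by omega⟩, Finset.mem_univ _⟩
  have hamin : ∀ i, ∀ j, P a j ≤ P i j := by
    intro i j
    rcases hchain a i with h1 | h2
    · exact h1 j
    · by_contra hj
      push_neg at hj
      have hlt2 : ∑ j', P i j' < ∑ j', P a j' :=
        Finset.sum_lt_sum (fun j' _ => h2 j') ⟨j, Finset.mem_univ _, hj⟩
      have := hamin' i (Finset.mem_univ _)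
      linarith
  have herase : (Finset.univ.erase a).Nonempty := by
    rw [← Finset.card_pos, Finset.card_erase_of_mem (Finset.mem_univ _)]
    simp only [Finset.card_univ, Fintype.card_fin]
    omega
  obtain ⟨b, hbmem, hbmin'⟩ := Finset.exists_min_image _ (fun i => ∑ j, P i j) herase
  have hba : b ≠ a := Finset.ne_of_mem_erase hbmem
  have hbmin : ∀ i, i ≠ a → ∀ j, P b j ≤ P i j := by
    intro i hia j
    rcases hchain b i with h1 | h2
    · exact h1 j
    · by_contra hj
      push_neg at hj
      have hlt2 : ∑ j', P i j' < ∑ j', P b j' :=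
        Finset.sum_lt_sum (fun j' _ => h2 j') ⟨j, Finset.mem_univ _, hj⟩
      have := hbmin' i (Finset.mem_erase.mpr ⟨hia, Finset.mem_univ _⟩)
      linarith
  -- every coordinate of b is < 2/n
  have htj : ∀ j, P b j < 2 / n := by
    intro j
    set q : Fin d → ℝ := fun j' => if j' = j then P b j else 1 with hqdef
    have hq : ∀ j', q j' ∈ Set.Icc (0:ℝ) 1 := by
      intro j'
      simp only [hqdef]
      split
      · exact ⟨(hP b j).1, (hP b j).2.le⟩
      · exact ⟨zero_le_one, le_refl 1⟩
    have hprod : (∏ j', q j') = P b j := by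
      simp [hqdef]
    have hoc : openCount P q ≤ 1 := by
      unfold openCount
      refine le_trans (Finset.card_le_card (fun i hi => ?_)) (by simp : ({a} : Finset (Fin n)).card ≤ 1)
      simp only [Finset.mem_filter, Finset.mem_univ, true_and] at hi
      simp only [Finset.mem_singleton]
      by_contra hia
      have h1 := hi j
      rw [hqdef] at h1
      simp only [if_pos rfl] at h1
      exact absurd h1 (not_lt.2 (hbmin i hia j))
    have hkey := (key q hq).1
    unfold openDisc at hkey
    rw [hprod] at hkey
    have hocR : (openCount P q : ℝ) ≤ 1 := by exact_mod_cast hoc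
    have h2 : (openCount P q : ℝ) / n ≤ 1 / n := by gcongr
    have h3 : (1:ℝ) / n + 1 / n = 2 / n := by ring
    linarith
  -- closed box at b gives contradiction
  have hqb : ∀ j, P b j ∈ Set.Icc (0:ℝ) 1 := fun j => ⟨(hP b j).1, (hP b j).2.le⟩
  have hkey := (key (P b) hqb).2
  unfold closedDisc at hkey
  have hcc : 2 ≤ closedCount P (P b) := by
    unfold closedCount
    have hsub : ({a, b} : Finset (Fin n)) ⊆
        Finset.univ.filter (fun i => ∀ j, P i j ≤ P b j) := by
      intro i hi
      simp only [Finset.mem_insert, Finset.mem_singleton] at hi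
      simp only [Finset.mem_filter, Finset.mem_univ, true_and]
      rcases hi with rfl | rfl
      · exact fun j => hamin b j
      · exact fun j => le_refl _
    calc 2 = ({a, b} : Finset (Fin n)).card := by
          rw [Finset.card_insert_of_notMem (Finset.notMem_singleton.mpr hba.symm),
            Finset.card_singleton]
      _ ≤ _ := Finset.card_le_card hsub
  have hprodle : (∏ j, P b j) ≤ (2 / (n:ℝ)) ^ d := by
    calc (∏ j, P b j) ≤ ∏ _j : Fin d, (2 / (n:ℝ)) :=
        Finset.prod_le_prod (fun j _ => (hP b j).1) (fun j _ => (htj j).le)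
      _ = (2 / n) ^ d := by rw [Finset.prod_const, Finset.card_univ, Fintype.card_fin]
  have hpow : ((2:ℝ) / n) ^ d ≤ 1 / n := by
    rcases h with ⟨hd2, hn4⟩ | ⟨hd3, hn3⟩
    · subst hd2
      have hn4R : (4:ℝ) ≤ n := by exact_mod_cast hn4
      rw [div_pow, div_le_div_iff₀ (by positivity) hn0]
      nlinarith
    · have hb0 : (0:ℝ) ≤ 2 / n := by positivity
      have hb1 : (2:ℝ) / n ≤ 1 := by rw [div_le_one hn0]; linarith
      calc ((2:ℝ) / n) ^ d ≤ (2 / n) ^ 3 := pow_le_pow_of_le_one hb0 hb1 hd3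
        _ ≤ 1 / n := by
          rw [div_pow, div_le_div_iff₀ (by positivity) hn0]
          nlinarith [mul_le_mul_of_nonneg_left (mul_le_mul_of_nonneg_left hnR (by linarith : (0:ℝ) ≤ (n:ℝ))) (by linarith : (0:ℝ) ≤ (n:ℝ))]
  have hccR : (2:ℝ) / n ≤ (closedCount P (P b) : ℝ) / n := by
    gcongr
    exact_mod_cast hcc
  have h2n : (2:ℝ) / n - 1 / n = 1 / n := by ring
  linarith
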